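/- arXiv:1402.0606 — 2 statements merged into one kernel-verified Lean document; each statement's English description precedes it below -/
import Mathlib

section
/- If X₁, …, Xₙ are i.i.d. N(μ, σ²) random variables, then the sample mean μ̄ = (∑ₖ Xₖ)/n and the sum of squares SS̄ = ∑ₖ (Xₖ − μ̄)² are independent random variables. -/
open MeasureTheory ProbabilityTheory Finset Matrix
open scoped ENNReal NNReal Real

section Aux

/-- Transfer of independence along a pushforward. -/
lemma indepFun_comp_of_map' {α β : Type*} [MeasurableSpace α] [MeasurableSpace β]
    {P : Measure α} {Q : Measure β} {ξ : α → β} (hξ : Measurable ξ)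
    (hmap : Measure.map ξ P = Q) {f g : β → ℝ} (hf : Measurable f) (hg : Measurable g)
    (h : IndepFun f g Q) : IndepFun (f ∘ ξ) (g ∘ ξ) P := by
  rw [indepFun_iff_measure_inter_preimage_eq_mul] at h ⊢
  intro s t hs ht
  have h1 : (f ∘ ξ) ⁻¹' s = ξ ⁻¹' (f ⁻¹' s) := rfl
  have h2 : (g ∘ ξ) ⁻¹' t = ξ ⁻¹' (g ⁻¹' t) := rfl
  rw [h1, h2, ← Set.preimage_inter, ← Measure.map_apply hξ ((hf hs).inter (hg ht)),
    ← Measure.map_apply hξ (hf hs), ← Measure.map_apply hξ (hg ht), hmap]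
  exact h s t hs ht

/-- Tonelli for finite products of functions over `Measure.pi`. -/
lemma lintegral_pi_prod' : ∀ (n : ℕ) {α : Type} [MeasurableSpace α]
    (μ : Fin n → Measure α) [∀ i, SigmaFinite (μ i)] (g : Fin n → α → ℝ≥0∞)
    (_hg : ∀ i, Measurable (g i)),
    ∫⁻ x, ∏ i, g i (x i) ∂(Measure.pi μ) = ∏ i, ∫⁻ t, g i t ∂(μ i) := by
  intro n
  induction n with
  | zero =>
    intro α _ μ _ g hg
    simp [lintegral_one, Measure.pi_univ]
  | succ m ih =>
    intro α _ μ _ g hg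
    have hmp := measurePreserving_piFinSuccAbove μ 0
    have key : ∀ x : Fin (m+1) → α, ∏ i, g i (x i)
        = g 0 (x 0) * ∏ j : Fin m, g ((0:Fin (m+1)).succAbove j) (x ((0:Fin (m+1)).succAbove j)) :=
      fun x => Fin.prod_univ_succAbove (fun i => g i (x i)) 0
    calc ∫⁻ x, ∏ i, g i (x i) ∂(Measure.pi μ)
        = ∫⁻ x, g 0 (x 0) * ∏ j : Fin m, g ((0:Fin (m+1)).succAbove j) (x ((0:Fin (m+1)).succAbove j)) ∂(Measure.pi μ) := by
          simp_rw [key]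
      _ = ∫⁻ p, g 0 p.1 * ∏ j : Fin m, g ((0:Fin (m+1)).succAbove j) (p.2 j)
            ∂((μ 0).prod (Measure.pi fun j => μ ((0:Fin (m+1)).succAbove j))) := by
          rw [← hmp.lintegral_comp]
          · rfl
          · exact (Measurable.mul ((hg 0).comp measurable_fst)
              (Finset.measurable_prod _ fun j _ => (hg _).comp ((measurable_pi_apply j).comp measurable_snd)))
      _ = (∫⁻ t, g 0 t ∂(μ 0)) * ∫⁻ y, ∏ j : Fin m, g ((0:Fin (m+1)).succAbove j) (y j)
            ∂(Measure.pi fun j => μ ((0:Fin (m+1)).succAbove j)) :=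
          lintegral_prod_mul ((hg 0).aemeasurable)
            (Finset.measurable_prod _ fun j _ => (hg _).comp (measurable_pi_apply j)).aemeasurable
      _ = (∫⁻ t, g 0 t ∂(μ 0)) * ∏ j : Fin m, ∫⁻ t, g ((0:Fin (m+1)).succAbove j) t ∂(μ ((0:Fin (m+1)).succAbove j)) := by
          rw [ih _ _ (fun j => hg _)]
      _ = ∏ i, ∫⁻ t, g i t ∂(μ i) := (Fin.prod_univ_succAbove (fun i => ∫⁻ t, g i t ∂(μ i)) 0).symm

lemma map_equiv_withDensity' {α β : Type*} [MeasurableSpace α] [MeasurableSpace β]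
    (e : α ≃ᵐ β) (μ : Measure α) {f : β → ℝ≥0∞} (hf : Measurable f) :
    Measure.map e (μ.withDensity (f ∘ e)) = (Measure.map e μ).withDensity f := by
  ext s hs
  rw [Measure.map_apply e.measurable hs, withDensity_apply _ (e.measurable hs),
    withDensity_apply _ hs, setLIntegral_map hs hf e.measurable]
  rfl

lemma pi_gauss' (n : ℕ) : Measure.pi (fun _ : Fin n => gaussianReal 0 1)
    = (volume : Measure (Fin n → ℝ)).withDensity (fun x => ∏ i, gaussianPDF 0 1 (x i)) := by
  refine (Measure.pi_eq (μ := fun _ : Fin n => gaussianReal 0 1)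
    (μ' := (volume : Measure (Fin n → ℝ)).withDensity fun x => ∏ i, gaussianPDF 0 1 (x i))
    fun s hs => ?_)
  rw [withDensity_apply _ (MeasurableSet.univ_pi hs)]
  have hind : ∀ x : Fin n → ℝ, (Set.univ.pi s).indicator (fun x => ∏ i, gaussianPDF 0 1 (x i)) x
      = ∏ i, (s i).indicator (gaussianPDF 0 1) (x i) := by
    intro x
    by_cases hx : x ∈ Set.univ.pi s
    · rw [Set.indicator_of_mem hx]
      exact Finset.prod_congr rfl fun i _ => (Set.indicator_of_mem (hx i trivial) _).symm
    · rw [Set.indicator_of_notMem hx]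
      simp only [Set.mem_univ_pi, not_forall] at hx
      obtain ⟨i, hi⟩ := hx
      exact (Finset.prod_eq_zero (Finset.mem_univ i) (by rw [Set.indicator_of_notMem hi])).symm
  rw [← lintegral_indicator (MeasurableSet.univ_pi hs)]
  simp_rw [hind]
  have hv : (volume : Measure (Fin n → ℝ)) = Measure.pi fun _ => volume := rfl
  rw [hv, lintegral_pi_prod' n _ _
    (fun i => (measurable_gaussianPDF 0 1).indicator (hs i))]
  refine Finset.prod_congr rfl fun i _ => ?_
  rw [lintegral_indicator (hs i), gaussianReal_of_var_ne_zero 0 one_ne_zero,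
    withDensity_apply _ (hs i)]

lemma exists_orth' (m : ℕ) : ∃ M : Matrix (Fin (m+1)) (Fin (m+1)) ℝ,
    Mᵀ * M = 1 ∧ ∀ i, M i 0 = (Real.sqrt (m+1))⁻¹ := by
  set n := m + 1
  have hn0 : (0:ℝ) < n := by positivity
  set u : EuclideanSpace ℝ (Fin n) := WithLp.toLp 2 (fun _ => (Real.sqrt n)⁻¹) with hu
  have hnorm : ‖u‖ = 1 := by
    rw [EuclideanSpace.norm_eq]
    simp only [hu, PiLp.toLp_apply]
    rw [Finset.sum_const, Finset.card_univ, Fintype.card_fin, Real.norm_eq_abs, sq_abs,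
      show ((Real.sqrt n)⁻¹)^2 = ((n:ℝ))⁻¹ by
        rw [← Real.sqrt_inv]; exact Real.sq_sqrt (by positivity),
      nsmul_eq_mul, mul_inv_cancel₀ (by positivity), Real.sqrt_one]
  have hcard : Module.finrank ℝ (EuclideanSpace ℝ (Fin n)) = Fintype.card (Fin n) := by
    simp [finrank_euclideanSpace_fin]
  have horth : Orthonormal ℝ (({0} : Set (Fin n)).restrict (fun _ => u)) := by
    constructor
    · intro i; exact hnorm
    · intro i j hij
      exact absurd (Subtype.ext (by
        have hi := i.2; have hj := j.2
        simp only [Set.mem_singleton_iff] at hi hj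
        rw [hi, hj])) hij
  obtain ⟨b, hb⟩ := Orthonormal.exists_orthonormalBasis_extension_of_card_eq hcard horth
  refine ⟨fun i j => b j i, ?_, fun i => ?_⟩
  · ext j k
    have ho := orthonormal_iff_ite.mp b.orthonormal j k
    rw [PiLp.inner_apply] at ho
    simp only [RCLike.inner_apply, conj_trivial] at ho
    simp only [Matrix.mul_apply, Matrix.transpose_apply, Matrix.one_apply]
    refine Eq.trans ?_ ho
    show ∑ x, (b j).ofLp x * (b k).ofLp x = _
    exact Finset.sum_congr rfl fun x _ => mul_comm _ _
  · have hb0 : b 0 = u := hb 0 rfl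
    have h2 : b 0 i = u i := by rw [hb0]
    show b 0 i = _
    rw [h2, hu]
    push_cast
    simp only [n, Nat.cast_add, Nat.cast_one]

variable {m : ℕ} {M : Matrix (Fin (m+1)) (Fin (m+1)) ℝ}

lemma orth_mulVec_sq' (h1 : Mᵀ * M = 1) (y : Fin (m+1) → ℝ) :
    ∑ i, (M.mulVec y i)^2 = ∑ i, (y i)^2 := by
  have e1 : ∑ i, (M.mulVec y i)^2 = M.mulVec y ⬝ᵥ M.mulVec y := by
    simp [dotProduct, sq]
  have e2 : M.mulVec y ⬝ᵥ M.mulVec y = y ⬝ᵥ y := by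
    rw [Matrix.dotProduct_mulVec, ← Matrix.mulVec_transpose, Matrix.mulVec_mulVec, h1,
      Matrix.one_mulVec]
  rw [e1, e2]
  simp [dotProduct, sq]

lemma orth_mulVec_sum' (h1 : Mᵀ * M = 1) (hM0 : ∀ i, M i 0 = (Real.sqrt (m+1))⁻¹)
    (y : Fin (m+1) → ℝ) :
    ∑ i, M.mulVec y i = Real.sqrt (m+1) * y 0 := by
  have hs : (0:ℝ) < Real.sqrt (m+1) := Real.sqrt_pos.mpr (by positivity)
  have col : ∀ j, ∑ i, M i j = Real.sqrt (m+1) * (if (0:Fin (m+1)) = j then (1:ℝ) else 0) := by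
    intro j
    have h := congrFun (congrFun h1 0) j
    simp only [Matrix.mul_apply, Matrix.transpose_apply, Matrix.one_apply] at h
    calc ∑ i, M i j = Real.sqrt (m+1) * ∑ i, M i 0 * M i j := by
          rw [Finset.mul_sum]
          refine Finset.sum_congr rfl fun i _ => ?_
          rw [hM0 i, ← mul_assoc, mul_inv_cancel₀ hs.ne', one_mul]
      _ = _ := by rw [h]
  calc ∑ i, M.mulVec y i = ∑ i, ∑ j, M i j * y j := rfl
    _ = ∑ j, (∑ i, M i j) * y j := by rw [Finset.sum_comm]; simp [Finset.sum_mul]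
    _ = ∑ j, Real.sqrt (m+1) * (if (0:Fin (m+1)) = j then (1:ℝ) else 0) * y j := by
        simp_rw [col]
    _ = Real.sqrt (m+1) * y 0 := by
        rw [Finset.sum_eq_single 0]
        · simp
        · intro j _ hj; simp [Ne.symm hj]
        · simp

noncomputable def rotEquiv' (M : Matrix (Fin (m+1)) (Fin (m+1)) ℝ) (h1 : Mᵀ * M = 1) :
    (Fin (m+1) → ℝ) ≃ᵐ (Fin (m+1) → ℝ) :=
  ((Matrix.toLinearEquiv' M (invertibleOfLeftInverse _ _ h1)).toContinuousLinearEquiv.toHomeomorph).toMeasurableEquiv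

lemma rotEquiv'_apply (h1 : Mᵀ * M = 1) (y : Fin (m+1) → ℝ) :
    rotEquiv' M h1 y = M.mulVec y := rfl

lemma det_orth' (h1 : Mᵀ * M = 1) : |M.det| = 1 := by
  have h : M.det * M.det = 1 := by
    have h2 := congrArg Matrix.det h1
    rwa [Matrix.det_mul, Matrix.det_transpose, Matrix.det_one] at h2
  rcases mul_self_eq_one_iff.mp h with h | h <;> rw [h] <;> norm_num

lemma map_rot_volume' (h1 : Mᵀ * M = 1) :
    Measure.map (rotEquiv' M h1) (volume : Measure (Fin (m+1) → ℝ)) = volume := by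
  have hfun : ⇑(rotEquiv' M h1) = ⇑(Matrix.toLin' M) := by
    funext y; rw [rotEquiv'_apply]; simp [Matrix.toLin'_apply]
  have hdet : LinearMap.det (Matrix.toLin' M) = M.det := LinearMap.det_toLin' M
  have hd1 : |M.det| = 1 := det_orth' h1
  have hne : LinearMap.det (Matrix.toLin' M) ≠ 0 := by
    rw [hdet]; intro h; rw [h] at hd1; norm_num at hd1
  rw [hfun, Real.map_linearMap_volume_pi_eq_smul_volume_pi hne, hdet, abs_inv, hd1]
  norm_num

lemma prod_pdf_eq' {k : ℕ} (x : Fin k → ℝ) :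
    ∏ i, gaussianPDFReal 0 1 (x i) = (Real.sqrt (2*π))⁻¹ ^ k * Real.exp (-(∑ i, (x i)^2)/2) := by
  simp only [gaussianPDFReal, NNReal.coe_one, mul_one, sub_zero]
  rw [Finset.prod_mul_distrib, Finset.prod_const, Finset.card_univ, Fintype.card_fin,
    ← Real.exp_sum]
  congr 1
  rw [← Finset.sum_div, ← Finset.sum_neg_distrib]

lemma map_rot_gauss' (h1 : Mᵀ * M = 1) :
    Measure.map (rotEquiv' M h1) (Measure.pi fun _ : Fin (m+1) => gaussianReal 0 1)
      = Measure.pi fun _ : Fin (m+1) => gaussianReal 0 1 := by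
  have hGmeas : Measurable (fun x : Fin (m+1) → ℝ => ∏ i, gaussianPDF 0 1 (x i)) :=
    Finset.measurable_prod _ fun i _ => (measurable_gaussianPDF 0 1).comp (measurable_pi_apply i)
  have hG : ((fun x : Fin (m+1) → ℝ => ∏ i, gaussianPDF 0 1 (x i)) ∘ (rotEquiv' M h1))
      = fun x : Fin (m+1) → ℝ => ∏ i, gaussianPDF 0 1 (x i) := by
    funext y
    simp only [Function.comp_apply, rotEquiv'_apply, gaussianPDF]
    rw [← ENNReal.ofReal_prod_of_nonneg (fun i _ => gaussianPDFReal_nonneg _ _ _),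
      ← ENNReal.ofReal_prod_of_nonneg (fun i _ => gaussianPDFReal_nonneg _ _ _)]
    congr 1
    rw [prod_pdf_eq', prod_pdf_eq', orth_mulVec_sq' h1]
  rw [pi_gauss']
  calc Measure.map (rotEquiv' M h1)
        ((volume : Measure (Fin (m+1) → ℝ)).withDensity fun x => ∏ i, gaussianPDF 0 1 (x i))
      = Measure.map (rotEquiv' M h1) ((volume : Measure (Fin (m+1) → ℝ)).withDensity
          ((fun x : Fin (m+1) → ℝ => ∏ i, gaussianPDF 0 1 (x i)) ∘ (rotEquiv' M h1))) := by
        rw [hG]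
    _ = (Measure.map (rotEquiv' M h1) volume).withDensity
          (fun x : Fin (m+1) → ℝ => ∏ i, gaussianPDF 0 1 (x i)) :=
        map_equiv_withDensity' _ _ hGmeas
    _ = (volume : Measure (Fin (m+1) → ℝ)).withDensity
          (fun x : Fin (m+1) → ℝ => ∏ i, gaussianPDF 0 1 (x i)) := by rw [map_rot_volume' h1]

lemma map_joint' {Ω : Type*} [MeasurableSpace Ω] (P : Measure Ω) [IsProbabilityMeasure P]
    {n : ℕ} (ν : Measure ℝ) [IsProbabilityMeasure ν]
    (X : Fin n → Ω → ℝ) (hX : ∀ k, Measurable (X k))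
    (hindep : iIndepFun X P)
    (hlaw : ∀ k, Measure.map (X k) P = ν) :
    Measure.map (fun ω k => X k ω) P = Measure.pi (fun _ : Fin n => ν) := by
  have hξ : Measurable (fun ω k => X k ω) := measurable_pi_lambda _ hX
  refine (Measure.pi_eq fun s hs => ?_).symm
  rw [Measure.map_apply hξ (MeasurableSet.univ_pi hs)]
  have hpre : (fun ω k => X k ω) ⁻¹' (Set.univ.pi s) = ⋂ i ∈ Finset.univ, X i ⁻¹' s i := by
    ext ω; simp [Set.mem_univ_pi]
  rw [hpre, hindep.measure_inter_preimage_eq_mul Finset.univ (fun i _ => hs i)]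
  exact Finset.prod_congr rfl fun i _ => by rw [← hlaw i, Measure.map_apply (hX i) (hs i)]

lemma indepFun_fst_snd'' {α β : Type*} [MeasurableSpace α] [MeasurableSpace β]
    (μ : Measure α) (ν : Measure β) [IsProbabilityMeasure μ] [IsProbabilityMeasure ν]
    {f : α → ℝ} {g : β → ℝ} (hf : Measurable f) (hg : Measurable g) :
    IndepFun (fun p : α × β => f p.1) (fun p : α × β => g p.2) (μ.prod ν) := by
  rw [indepFun_iff_measure_inter_preimage_eq_mul]
  intro s t hs ht
  have h1 : (fun p : α × β => f p.1) ⁻¹' s = (f ⁻¹' s) ×ˢ Set.univ := by ext p; simp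
  have h2 : (fun p : α × β => g p.2) ⁻¹' t = Set.univ ×ˢ (g ⁻¹' t) := by ext p; simp
  rw [h1, h2, Set.prod_inter_prod, Set.inter_univ, Set.univ_inter,
    Measure.prod_prod, Measure.prod_prod, Measure.prod_prod]
  simp [measure_univ]

/-- Independence of the 0-th coordinate and the sum of squares of the other coordinates,
under the standard Gaussian product measure. -/
lemma indep_core' (m : ℕ) :
    IndepFun (fun y : Fin (m+1) → ℝ => y 0)
      (fun y : Fin (m+1) → ℝ => ∑ i ∈ Finset.univ.erase 0, (y i)^2)
      (Measure.pi fun _ : Fin (m+1) => gaussianReal 0 1) := by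
  set e := MeasurableEquiv.piFinSuccAbove (fun _ : Fin (m+1) => ℝ) 0 with he
  have hmp := measurePreserving_piFinSuccAbove (fun _ : Fin (m+1) => gaussianReal 0 1) 0
  have hB' : Measurable (fun p : ℝ × (Fin m → ℝ) => ∑ j : Fin m, (p.2 j)^2) :=
    Finset.measurable_sum _ fun j _ =>
      (((measurable_pi_apply j).comp measurable_snd).pow_const 2)
  have hind := indepFun_fst_snd'' (gaussianReal 0 1)
    (Measure.pi fun _ : Fin m => gaussianReal 0 1)
    (f := fun t : ℝ => t) (g := fun y : Fin m → ℝ => ∑ j, (y j)^2)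
    measurable_id (Finset.measurable_sum _ fun j _ => (measurable_pi_apply j).pow_const 2)
  have htrans := indepFun_comp_of_map' e.measurable hmp.map_eq
    measurable_fst hB' hind
  have hfst : ((fun p : ℝ × (Fin m → ℝ) => p.1) ∘ ⇑e) = fun y : Fin (m+1) → ℝ => y 0 := rfl
  have hsnd : ((fun p : ℝ × (Fin m → ℝ) => ∑ j : Fin m, (p.2 j)^2) ∘ ⇑e)
      = fun y : Fin (m+1) → ℝ => ∑ i ∈ Finset.univ.erase 0, (y i)^2 := by
    funext y
    have h1 : ∑ i : Fin (m+1), (y i)^2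
        = (y 0)^2 + ∑ j : Fin m, (y ((0:Fin (m+1)).succAbove j))^2 :=
      Fin.sum_univ_succAbove (fun i => (y i)^2) 0
    have h2 : ∑ i ∈ Finset.univ.erase 0, (y i)^2
        = ∑ i : Fin (m+1), (y i)^2 - (y 0)^2 :=
      Finset.sum_erase_eq_sub (Finset.mem_univ 0)
    simp only [Function.comp_apply]
    rw [h2, h1]
    ring_nf
    rfl
  rwa [hfst, hsnd] at htrans

end Aux


section KeyAlg
variable {m : ℕ} {M : Matrix (Fin (m+1)) (Fin (m+1)) ℝ}


lemma key1' (h1 : Mᵀ * M = 1) (hM0 : ∀ i, M i 0 = (Real.sqrt (m+1))⁻¹)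
    (σ μ : ℝ) (y : Fin (m+1) → ℝ) :
    (∑ i, (σ * M.mulVec y i + μ)) / ((m+1:ℕ):ℝ)
      = σ * (y 0 / Real.sqrt ((m:ℝ)+1)) + μ := by
  have hn0 : ((m:ℝ)+1) ≠ 0 := by positivity
  have hsqp : (0:ℝ) < Real.sqrt ((m:ℝ)+1) := Real.sqrt_pos.mpr (by positivity)
  have hsq : Real.sqrt ((m:ℝ)+1) * Real.sqrt ((m:ℝ)+1) = (m:ℝ)+1 :=
    Real.mul_self_sqrt (by positivity)
  rw [Finset.sum_add_distrib, Finset.sum_const, ← Finset.mul_sum, orth_mulVec_sum' h1 hM0]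
  simp only [Finset.card_univ, Fintype.card_fin, nsmul_eq_mul]
  push_cast
  set t := Real.sqrt ((m:ℝ)+1) with ht
  rw [← hsq]
  have ht0 : t ≠ 0 := hsqp.ne'
  field_simp

lemma key2' (h1 : Mᵀ * M = 1) (hM0 : ∀ i, M i 0 = (Real.sqrt (m+1))⁻¹)
    (σ μ : ℝ) (y : Fin (m+1) → ℝ) :
    ∑ i, ((σ * M.mulVec y i + μ) - (∑ j, (σ * M.mulVec y j + μ))/((m+1:ℕ):ℝ))^2
      = σ^2 * ∑ i ∈ Finset.univ.erase 0, (y i)^2 := by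
  have hn0 : ((m:ℝ)+1) ≠ 0 := by positivity
  have hsq : Real.sqrt ((m:ℝ)+1) * Real.sqrt ((m:ℝ)+1) = (m:ℝ)+1 :=
    Real.mul_self_sqrt (by positivity)
  set a : Fin (m+1) → ℝ := M.mulVec y with ha
  set S : ℝ := ∑ j, a j with hS
  have hSval : S = Real.sqrt ((m:ℝ)+1) * y 0 := by
    have := orth_mulVec_sum' h1 hM0 y
    push_cast at this ⊢
    simpa [hS, ha] using this
  have hinner : ∀ i, (σ * a i + μ) - (∑ j, (σ * a j + μ))/((m+1:ℕ):ℝ)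
      = σ * (a i - S/((m:ℝ)+1)) := by
    intro i
    rw [Finset.sum_add_distrib, Finset.sum_const, ← Finset.mul_sum, ← hS]
    simp only [Finset.card_univ, Fintype.card_fin, nsmul_eq_mul]
    push_cast
    field_simp
    ring
  have hexp : ∑ i, (a i - S/((m:ℝ)+1))^2
      = ∑ i, (a i)^2 - 2*(S/((m:ℝ)+1))*S + ((m:ℝ)+1)*(S/((m:ℝ)+1))^2 := by
    have hterm : ∀ i : Fin (m+1), (a i - S/((m:ℝ)+1))^2
        = (a i)^2 - 2*(S/((m:ℝ)+1))*(a i) + (S/((m:ℝ)+1))^2 := fun i => by ring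
    rw [Finset.sum_congr rfl fun i _ => hterm i]
    rw [Finset.sum_add_distrib, Finset.sum_sub_distrib, ← Finset.mul_sum, ← hS,
      Finset.sum_const]
    simp only [Finset.card_univ, Fintype.card_fin, nsmul_eq_mul]
    push_cast
    ring
  calc ∑ i, ((σ * a i + μ) - (∑ j, (σ * a j + μ))/((m+1:ℕ):ℝ))^2
      = ∑ i, (σ * (a i - S/((m:ℝ)+1)))^2 := Finset.sum_congr rfl fun i _ => by rw [hinner i]
    _ = σ^2 * ∑ i, (a i - S/((m:ℝ)+1))^2 := by
        rw [Finset.mul_sum]; exact Finset.sum_congr rfl fun i _ => by ring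
    _ = σ^2 * (∑ i, (y i)^2 - (y 0)^2) := by
        rw [hexp, ha, orth_mulVec_sq' h1]
        congr 1
        rw [hSval]
        have hsqp : (0:ℝ) < Real.sqrt ((m:ℝ)+1) := Real.sqrt_pos.mpr (by positivity)
        set t := Real.sqrt ((m:ℝ)+1) with ht
        rw [← hsq]
        have ht0 : t ≠ 0 := hsqp.ne'
        field_simp
        ring
    _ = σ^2 * ∑ i ∈ Finset.univ.erase 0, (y i)^2 := by
        rw [Finset.sum_erase_eq_sub (Finset.mem_univ 0)]
end KeyAlg

/-- For i.i.d. `N(μ,σ²)` random variables `X₁,…,Xₙ`, the sample mean `μ̄` and the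
sum of squares `SS̄ = ∑ₖ(Xₖ − μ̄)²` are independent. -/
theorem sample_mean_indep_sum_sq {Ω : Type*} [MeasurableSpace Ω] (P : Measure Ω)
    [IsProbabilityMeasure P] (n : ℕ) (hn : 1 ≤ n) (μ : ℝ) (σ : NNReal) (hσ : 0 < σ)
    (X : Fin n → Ω → ℝ) (hX : ∀ k, Measurable (X k))
    (hindep : iIndepFun X P)
    (hlaw : ∀ k, Measure.map (X k) P = gaussianReal μ (σ ^ 2)) :
    IndepFun (fun ω => (∑ k, X k ω) / n)
      (fun ω => ∑ k, (X k ω - (∑ j, X j ω) / n) ^ 2) P := by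
  obtain ⟨m, rfl⟩ : ∃ m, n = m + 1 := ⟨n - 1, (Nat.succ_pred_eq_of_pos hn).symm⟩
  have hσ' : (σ:ℝ) ≠ 0 := by positivity
  set Γ : Measure (Fin (m+1) → ℝ) := Measure.pi fun _ => gaussianReal 0 1 with hΓ
  set Pi' : Measure (Fin (m+1) → ℝ) := Measure.pi fun _ => gaussianReal μ (σ^2) with hPidef
  -- affine measurable equivalence on ℝ
  set aff : ℝ ≃ᵐ ℝ :=
    ((Homeomorph.mulLeft₀ (σ:ℝ) hσ').trans (Homeomorph.addRight μ)).toMeasurableEquiv with haffdef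
  have haff_law : Measure.map aff (gaussianReal 0 1) = gaussianReal μ (σ^2) := by
    have hco : ⇑aff = (fun x : ℝ => x + μ) ∘ (fun x => (σ:ℝ) * x) := rfl
    rw [hco, ← Measure.map_map (by fun_prop) (by fun_prop),
      gaussianReal_map_const_mul (σ:ℝ),
      show (fun x : ℝ => x + μ) = (· + μ) from rfl, gaussianReal_map_add_const μ]
    congr 1
    · ring
    · ext; simp [sq]
  set Aff : (Fin (m+1) → ℝ) ≃ᵐ (Fin (m+1) → ℝ) :=
    MeasurableEquiv.piCongrRight (fun _ => aff) with hAffdef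
  have hAffmp : MeasurePreserving Aff Γ Pi' := by
    have h := measurePreserving_pi (fun _ : Fin (m+1) => gaussianReal 0 1)
      (fun _ : Fin (m+1) => gaussianReal μ (σ^2))
      (f := fun _ t => aff t) (fun i => ⟨aff.measurable, haff_law⟩)
    exact ⟨Aff.measurable, h.map_eq⟩
  obtain ⟨M, h1, hM0⟩ := exists_orth' m
  set T := rotEquiv' M h1 with hTdef
  set W := T.trans Aff with hWdef
  have hWmp : MeasurePreserving W Γ Pi' :=
    hAffmp.comp ⟨T.measurable, map_rot_gauss' h1⟩
  -- measurable statistics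
  have hmbar : Measurable (fun x : Fin (m+1) → ℝ => (∑ i, x i) / ((m+1:ℕ):ℝ)) :=
    (Finset.measurable_sum _ fun i _ => measurable_pi_apply i).div_const _
  have hssq : Measurable
      (fun x : Fin (m+1) → ℝ => ∑ i, (x i - (∑ j, x j) / ((m+1:ℕ):ℝ))^2) :=
    Finset.measurable_sum _ fun i _ =>
      ((measurable_pi_apply i).sub
        ((Finset.measurable_sum _ fun j _ => measurable_pi_apply j).div_const _)).pow_const 2
  -- compose the core independence with φ, ψ
  set φ : ℝ → ℝ := fun t => (σ:ℝ) * (t / Real.sqrt ((m:ℝ)+1)) + μ with hφdef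
  set ψ : ℝ → ℝ := fun t => (σ:ℝ)^2 * t with hψdef
  have hφm : Measurable φ := ((measurable_id.div_const _).const_mul _).add_const _
  have hψm : Measurable ψ := measurable_id.const_mul _
  have hstep := (indep_core' m).comp hφm hψm
  -- identify the composed functions after applying W.symm
  have hfe : ((φ ∘ (fun y : Fin (m+1) → ℝ => y 0)) ∘ ⇑W.symm)
      = fun x : Fin (m+1) → ℝ => (∑ i, x i) / ((m+1:ℕ):ℝ) := by
    funext x
    have hx : W (W.symm x) = x := W.apply_symm_apply x
    calc (φ ∘ (fun y : Fin (m+1) → ℝ => y 0)) (W.symm x)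
        = (∑ i, ((σ:ℝ) * M.mulVec (W.symm x) i + μ)) / ((m+1:ℕ):ℝ) :=
          (key1' h1 hM0 (σ:ℝ) μ (W.symm x)).symm
      _ = (∑ i, W (W.symm x) i) / ((m+1:ℕ):ℝ) := rfl
      _ = (∑ i, x i) / ((m+1:ℕ):ℝ) := by rw [hx]
  have hge : ((ψ ∘ (fun y : Fin (m+1) → ℝ => ∑ i ∈ Finset.univ.erase 0, (y i)^2)) ∘ ⇑W.symm)
      = fun x : Fin (m+1) → ℝ => ∑ i, (x i - (∑ j, x j) / ((m+1:ℕ):ℝ))^2 := by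
    funext x
    have hx : W (W.symm x) = x := W.apply_symm_apply x
    calc (ψ ∘ (fun y : Fin (m+1) → ℝ => ∑ i ∈ Finset.univ.erase 0, (y i)^2)) (W.symm x)
        = ∑ i, (((σ:ℝ) * M.mulVec (W.symm x) i + μ)
            - (∑ j, ((σ:ℝ) * M.mulVec (W.symm x) j + μ)) / ((m+1:ℕ):ℝ))^2 :=
          (key2' h1 hM0 (σ:ℝ) μ (W.symm x)).symm
      _ = ∑ i, (W (W.symm x) i - (∑ j, W (W.symm x) j) / ((m+1:ℕ):ℝ))^2 := rfl
      _ = ∑ i, (x i - (∑ j, x j) / ((m+1:ℕ):ℝ))^2 := by rw [hx]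
  -- transfer to Pi'
  have hWsymm : MeasurePreserving W.symm Pi' Γ := MeasurePreserving.symm _ hWmp
  have hPi : IndepFun (fun x : Fin (m+1) → ℝ => (∑ i, x i) / ((m+1:ℕ):ℝ))
      (fun x : Fin (m+1) → ℝ => ∑ i, (x i - (∑ j, x j) / ((m+1:ℕ):ℝ))^2) Pi' := by
    have h := indepFun_comp_of_map' W.symm.measurable hWsymm.map_eq
      (hφm.comp (measurable_pi_apply 0))
      (hψm.comp (Finset.measurable_sum _ fun i _ => (measurable_pi_apply i).pow_const 2))
      hstep
    rwa [hfe, hge] at h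
  -- transfer to Ω
  have hξmap := map_joint' P (gaussianReal μ (σ^2)) X hX hindep hlaw
  have hfinal := indepFun_comp_of_map' (measurable_pi_lambda _ hX) hξmap hmbar hssq hPi
  exact hfinal
end

section
/- If X₁, …, Xₙ are i.i.d. N(μ, σ²) with n ≥ 2, then SS̄/σ² = (∑ₖ(Xₖ − μ̄)²)/σ² has the chi-squared distribution with n − 1 degrees of freedom. -/
open MeasureTheory ProbabilityTheory

/-- Chi-squared density with `m` degrees of freedom. -/
noncomputable def chiSqPDF (m : ℕ) (x : ℝ) : ℝ :=
  if 0 < x then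
    x ^ ((m : ℝ) / 2 - 1) * Real.exp (-x / 2) / (2 ^ ((m : ℝ) / 2) * Real.Gamma ((m : ℝ) / 2))
  else 0

/-- The chi-squared distribution with `m` degrees of freedom, as a measure on ℝ. -/
noncomputable def chiSqMeasure (m : ℕ) : Measure ℝ :=
  volume.withDensity fun x => ENNReal.ofReal (chiSqPDF m x)

section Auxiliary

open Real Set Metric
open scoped ENNReal NNReal

noncomputable section
namespace CochranAux


/-- standard gaussian measure on Euclidean space -/
def stdGauss (m : ℕ) : Measure (EuclideanSpace ℝ (Fin m)) :=
  volume.withDensity fun x => ENNReal.ofReal ((Real.sqrt (2*π))⁻¹ ^ m * Real.exp (-‖x‖^2/2))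

lemma measurable_stdGaussDensity (m : ℕ) :
    Measurable fun x : EuclideanSpace ℝ (Fin m) =>
      ENNReal.ofReal ((Real.sqrt (2*π))⁻¹ ^ m * Real.exp (-‖x‖^2/2)) := by
  apply Measurable.ennreal_ofReal
  fun_prop

lemma prod_gaussianPDF (m : ℕ) (y : EuclideanSpace ℝ (Fin m)) :
    (∏ i, gaussianPDF 0 1 (y i)) =
      ENNReal.ofReal ((Real.sqrt (2*π))⁻¹ ^ m * Real.exp (-‖y‖^2/2)) := by
  have hnorm : ‖y‖^2 = ∑ i, (y i)^2 := by
    rw [EuclideanSpace.norm_eq, Real.sq_sqrt (by positivity)]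
    simp [Real.norm_eq_abs, sq_abs]
  have h1 : ∀ t : ℝ, gaussianPDFReal 0 1 t = (Real.sqrt (2*π))⁻¹ * Real.exp (-t^2/2) := by
    intro t
    simp [gaussianPDFReal, neg_div]
  simp_rw [gaussianPDF, ← ENNReal.ofReal_prod_of_nonneg
    (fun i _ => gaussianPDFReal_nonneg 0 1 (y i)), h1]
  rw [Finset.prod_mul_distrib, Finset.prod_const, ← Real.exp_sum]
  congr 3
  · simp
  rw [hnorm, ← Finset.sum_div, ← Finset.sum_neg_distrib]



/-- lintegral of a product of functions of coordinates over a pi measure. -/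
lemma lintegral_pi_prod : ∀ {n : ℕ} {α : Fin n → Type} [∀ i, MeasurableSpace (α i)]
    (μ : ∀ i, Measure (α i)) [∀ i, SigmaFinite (μ i)] (f : ∀ i, α i → ℝ≥0∞)
    (_hf : ∀ i, Measurable (f i)),
    ∫⁻ x, ∏ i, f i (x i) ∂Measure.pi μ = ∏ i, ∫⁻ y, f i y ∂μ i := by
  intro n
  induction n with
  | zero =>
    intro α _ μ _ f hf
    simp [Measure.pi_univ]
  | succ k ih =>
    intro α _ μ _ f hf
    have hmp := measurePreserving_piFinSuccAbove μ 0
    have hg : Measurable fun p : α 0 × ∀ j, α ((0 : Fin (k+1)).succAbove j) =>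
        f 0 p.1 * ∏ j, f ((0 : Fin (k+1)).succAbove j) (p.2 j) :=
      ((hf 0).comp measurable_fst).mul
        (Finset.measurable_prod _ fun j _ =>
          (hf _).comp ((measurable_pi_apply j).comp measurable_snd))
    calc ∫⁻ x, ∏ i, f i (x i) ∂Measure.pi μ
        = ∫⁻ x, f 0 (x 0) * ∏ j, f ((0 : Fin (k+1)).succAbove j) (x ((0 : Fin (k+1)).succAbove j))
            ∂Measure.pi μ := by
          congr 1; funext x; rw [Fin.prod_univ_succAbove (fun i => f i (x i)) 0]
      _ = ∫⁻ p, f 0 p.1 * ∏ j, f ((0 : Fin (k+1)).succAbove j) (p.2 j)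
            ∂((μ 0).prod (Measure.pi fun j => μ ((0 : Fin (k+1)).succAbove j))) :=
          hmp.lintegral_comp hg
      _ = (∫⁻ y, f 0 y ∂μ 0) * ∏ j, ∫⁻ y, f _ y ∂μ ((0 : Fin (k+1)).succAbove j) := by
          have h2 : Measurable fun x : ∀ j, α ((0 : Fin (k+1)).succAbove j) =>
              ∏ j, f ((0 : Fin (k+1)).succAbove j) (x j) :=
            Finset.measurable_prod _ fun j _ => (hf _).comp (measurable_pi_apply j)
          have := lintegral_prod_mul (f := f 0)
            (g := fun x : ∀ j, α ((0 : Fin (k+1)).succAbove j) =>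
              ∏ j, f ((0 : Fin (k+1)).succAbove j) (x j))
            ((hf 0).aemeasurable) h2.aemeasurable
            (μ := μ 0) (ν := Measure.pi fun j => μ ((0 : Fin (k+1)).succAbove j))
          rw [this, ih _ _ fun j => hf _]
      _ = ∏ i, ∫⁻ y, f i y ∂μ i := (Fin.prod_univ_succAbove (fun i => ∫⁻ y, f i y ∂μ i) 0).symm

/-- joint law of independent random variables is the product of the laws. -/
lemma map_pi_of_iIndep {n : ℕ} {Ω : Type*} [MeasurableSpace Ω] (P : Measure Ω)
    [IsProbabilityMeasure P] (Y : Fin n → Ω → ℝ) (hmeas : ∀ i, Measurable (Y i))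
    (hind : iIndepFun Y P)
    (ν : Fin n → Measure ℝ) [∀ i, IsProbabilityMeasure (ν i)]
    (hlaw : ∀ i, Measure.map (Y i) P = ν i) :
    Measure.map (fun ω i => Y i ω) P = Measure.pi ν := by
  refine (Measure.pi_eq fun s hs => ?_).symm
  rw [Measure.map_apply (measurable_pi_lambda _ hmeas) (MeasurableSet.univ_pi hs)]
  have hpre : (fun ω i => Y i ω) ⁻¹' (univ.pi s) = ⋂ i ∈ Finset.univ, Y i ⁻¹' s i := by
    ext ω; simp [Set.mem_pi]
  rw [hpre, hind.measure_inter_preimage_eq_mul Finset.univ (fun i _ => hs i)]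
  exact Finset.prod_congr rfl fun i _ => by
    rw [← hlaw i, Measure.map_apply (hmeas i) (hs i)]

/-- pushforward of a withDensity along a measurable equivalence. -/
lemma map_withDensity_equiv {α β : Type*} [MeasurableSpace α] [MeasurableSpace β]
    (μ : Measure α) (e : α ≃ᵐ β) {f : α → ℝ≥0∞} (hf : Measurable f) :
    (μ.withDensity f).map e = (μ.map e).withDensity fun y => f (e.symm y) := by
  ext s hs
  rw [Measure.map_apply e.measurable hs, withDensity_apply _ (e.measurable hs),
    withDensity_apply _ hs,
    setLIntegral_map (μ := μ) hs (f := fun y => f (e.symm y))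
      (hf.comp e.symm.measurable) e.measurable]
  simp



lemma pi_gaussian_eq (m : ℕ) :
    Measure.pi (fun _ : Fin m => gaussianReal 0 1) =
      (volume : Measure (Fin m → ℝ)).withDensity fun x => ∏ i, gaussianPDF 0 1 (x i) := by
  refine Measure.pi_eq fun s hs => ?_
  rw [withDensity_apply _ (MeasurableSet.univ_pi hs), ← lintegral_indicator (MeasurableSet.univ_pi hs) fun x => ∏ i, gaussianPDF 0 1 (x i)]
  have hker : ∀ x : Fin m → ℝ, (univ.pi s).indicator (fun x => ∏ i, gaussianPDF 0 1 (x i)) x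
      = ∏ i, (s i).indicator (gaussianPDF 0 1) (x i) := by
    intro x
    by_cases hx : x ∈ univ.pi s
    · rw [indicator_of_mem hx]
      exact Finset.prod_congr rfl fun i _ => (indicator_of_mem (hx i trivial) _).symm
    · rw [indicator_of_notMem hx]
      have : ∃ i, x i ∉ s i := by simpa [Set.mem_pi] using hx
      obtain ⟨i, hi⟩ := this
      exact (Finset.prod_eq_zero (Finset.mem_univ i) (indicator_of_notMem hi _)).symm
  simp_rw [hker]
  rw [MeasureTheory.volume_pi, lintegral_pi_prod _ _
    (fun i => (measurable_gaussianPDF 0 1).indicator (hs i))]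
  refine Finset.prod_congr rfl fun i _ => ?_
  rw [gaussianReal_apply 0 one_ne_zero (s i)]
  exact lintegral_indicator (hs i) _

lemma stdGauss_eq_map (m : ℕ) :
    (Measure.pi fun _ : Fin m => gaussianReal 0 1).map
      ((MeasurableEquiv.toLp 2 (Fin m → ℝ)).symm).symm = stdGauss m := by
  have hf : Measurable fun x : Fin m → ℝ => ∏ i, gaussianPDF 0 1 (x i) :=
    Finset.measurable_prod _ fun i _ => (measurable_gaussianPDF 0 1).comp (measurable_pi_apply i)
  rw [pi_gaussian_eq, map_withDensity_equiv _ _ hf,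
    (MeasurePreserving.symm _ (EuclideanSpace.volume_preserving_symm_measurableEquiv_toLp (Fin m))).map_eq,
    stdGauss]
  congr 1
  funext y
  rw [← prod_gaussianPDF m y]
  rfl

lemma stdGauss_map_isometry {m : ℕ}
    (L : EuclideanSpace ℝ (Fin m) ≃ₗᵢ[ℝ] EuclideanSpace ℝ (Fin m)) :
    (stdGauss m).map L = stdGauss m := by
  let e : EuclideanSpace ℝ (Fin m) ≃ᵐ EuclideanSpace ℝ (Fin m) :=
    L.toHomeomorph.toMeasurableEquiv
  have hcoe : (L : EuclideanSpace ℝ (Fin m) → EuclideanSpace ℝ (Fin m)) = e := rfl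
  rw [stdGauss, hcoe, map_withDensity_equiv _ e (measurable_stdGaussDensity m)]
  have hvol : Measure.map (⇑e) volume = volume := L.measurePreserving.map_eq
  rw [hvol]
  congr 1
  funext y
  have : ‖(e.symm y : EuclideanSpace ℝ (Fin m))‖ = ‖y‖ := L.symm.norm_map y
  rw [show (e.symm y : EuclideanSpace ℝ (Fin m)) = L.symm y from rfl, L.symm.norm_map]

lemma map_sum_sq_pi_gaussian (k : ℕ) :
    Measure.map (fun x : Fin k → ℝ => ∑ j, x j ^ 2) (Measure.pi fun _ => gaussianReal 0 1)
      = (stdGauss k).map (fun y => ‖y‖^2) := by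
  rw [← stdGauss_eq_map k, Measure.map_map (by fun_prop) (MeasurableEquiv.measurable _)]
  congr 1
  funext x
  show ∑ j, x j ^ 2 = ‖(((MeasurableEquiv.toLp 2 (Fin k → ℝ)).symm).symm x : EuclideanSpace ℝ (Fin k))‖ ^ 2
  rw [EuclideanSpace.norm_eq, Real.sq_sqrt (by positivity)]
  simp [Real.norm_eq_abs, sq_abs]

lemma map_h_stdGauss (k : ℕ) :
    (stdGauss (k+1)).map (fun w => (∑ i, w i ^ 2) - w (Fin.last k) ^ 2)
      = Measure.map (fun x : Fin k → ℝ => ∑ j, x j ^ 2) (Measure.pi fun _ => gaussianReal 0 1) := by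
  rw [← stdGauss_eq_map (k+1), Measure.map_map (by fun_prop) (MeasurableEquiv.measurable _)]
  have hfun : ((fun w : EuclideanSpace ℝ (Fin (k+1)) => (∑ i, w i ^ 2) - w (Fin.last k) ^ 2) ∘
        ((MeasurableEquiv.toLp 2 (Fin (k+1) → ℝ)).symm).symm)
      = (fun p : ℝ × (Fin k → ℝ) => ∑ j, p.2 j ^ 2) ∘
        (MeasurableEquiv.piFinSuccAbove (fun _ => ℝ) (Fin.last k)) := by
    funext x
    show (∑ i, x i ^ 2) - x (Fin.last k) ^ 2 = ∑ j, x ((Fin.last k).succAbove j) ^ 2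
    rw [Fin.sum_univ_succAbove (fun i => x i ^ 2) (Fin.last k)]
    ring
  rw [hfun, ← Measure.map_map (by fun_prop) (MeasurableEquiv.measurable _),
    (measurePreserving_piFinSuccAbove (fun _ => gaussianReal 0 1) (Fin.last k)).map_eq,
    show (fun p : ℝ × (Fin k → ℝ) => ∑ j, p.2 j ^ 2)
      = (fun x : Fin k → ℝ => ∑ j, x j ^ 2) ∘ Prod.snd from rfl,
    ← Measure.map_map (by fun_prop) measurable_snd, Measure.map_snd_prod]
  simp

lemma chiSqPDF_nonneg (m : ℕ) (x : ℝ) : 0 ≤ chiSqPDF m x := by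
  unfold chiSqPDF
  split
  · positivity
  · exact le_rfl

lemma measurable_chiSqPDF (m : ℕ) : Measurable (chiSqPDF m) := by
  unfold chiSqPDF
  refine Measurable.ite measurableSet_Ioi ?_ measurable_const
  fun_prop

lemma integrable_chiSqPDF {m : ℕ} (hm : 0 < m) : Integrable (chiSqPDF m) := by
  have ha : 0 < (m:ℝ)/2 := by positivity
  have h1 := Real.GammaIntegral_convergent ha
  have h2 : IntegrableOn (fun x : ℝ => Real.exp (-(2⁻¹*x)) * (2⁻¹*x) ^ ((m:ℝ)/2 - 1)) (Ioi 0) := by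
    have h1' : IntegrableOn (fun x : ℝ => Real.exp (-x) * x ^ ((m:ℝ)/2 - 1))
        (Ioi (2⁻¹ * 0)) := by simpa using h1
    simpa using (integrableOn_Ioi_comp_mul_left_iff
      (fun x : ℝ => Real.exp (-x) * x ^ ((m:ℝ)/2 - 1)) 0 (by norm_num : (0:ℝ) < 2⁻¹)).2 h1'
  have heq : chiSqPDF m = (Ioi (0:ℝ)).indicator
      (fun x => (2:ℝ) ^ ((m:ℝ)/2-1) / (2 ^ ((m : ℝ) / 2) * Real.Gamma ((m : ℝ) / 2)) *
        (Real.exp (-(2⁻¹*x)) * (2⁻¹*x) ^ ((m:ℝ)/2 - 1))) := by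
    funext x
    by_cases hx : 0 < x
    · rw [indicator_of_mem (mem_Ioi.2 hx)]
      rw [chiSqPDF, if_pos (show (0:ℝ) < x from hx)]
      rw [Real.mul_rpow (by norm_num) hx.le, Real.inv_rpow (by norm_num)]
      have : -(2⁻¹*x) = -x/2 := by ring
      rw [this]
      field_simp
    · rw [indicator_of_notMem (by simpa using hx), chiSqPDF, if_neg hx]
  rw [heq, integrable_indicator_iff measurableSet_Ioi]
  exact h2.const_mul _

lemma const_identity {m : ℕ} (hm : 0 < m) :
    (m : ℝ) * (Real.sqrt π ^ m / Real.Gamma ((m:ℝ)/2 + 1)) * ((Real.sqrt (2*π))⁻¹ ^ m / 2)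
      = 1 / (2 ^ ((m : ℝ) / 2) * Real.Gamma ((m : ℝ) / 2)) := by
  have hπ : (0:ℝ) < π := Real.pi_pos
  have hΓ : 0 < Real.Gamma ((m:ℝ)/2) := Real.Gamma_pos_of_pos (by positivity)
  have hsqrt2 : Real.sqrt (2*π) = Real.sqrt 2 * Real.sqrt π := Real.sqrt_mul (by norm_num) π
  have hs2 : (Real.sqrt 2) ^ m = 2 ^ ((m : ℝ) / 2) := by
    rw [show Real.sqrt 2 = (2:ℝ) ^ ((1:ℝ)/2) from Real.sqrt_eq_rpow 2,
      ← Real.rpow_natCast ((2:ℝ) ^ ((1:ℝ)/2)) m, ← Real.rpow_mul (by norm_num)]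
    congr 1
    ring
  have hΓ1 : Real.Gamma ((m:ℝ)/2 + 1) = ((m:ℝ)/2) * Real.Gamma ((m:ℝ)/2) :=
    Real.Gamma_add_one (by positivity)
  have hsπ : (0:ℝ) < Real.sqrt π := Real.sqrt_pos.2 hπ
  have hs2pos : (0:ℝ) < 2 ^ ((m : ℝ) / 2) := Real.rpow_pos_of_pos (by norm_num) _
  have hmpos : (0:ℝ) < m := by exact_mod_cast hm
  rw [hsqrt2, hΓ1, mul_inv, mul_pow, inv_pow, inv_pow, hs2]
  have h1 : Real.sqrt π ^ m ≠ 0 := pow_ne_zero _ hsπ.ne'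
  field_simp

lemma integrable_gaussian_norm (m : ℕ) :
    Integrable (fun v : EuclideanSpace ℝ (Fin m) => Real.exp (-‖v‖^2/2)) := by
  have h := (GaussianFourier.integrable_cexp_neg_mul_sq_norm_add_of_euclideanSpace
    (b := (1/2 : ℂ)) (by norm_num) 0 (0 : EuclideanSpace ℝ (Fin m))).norm
  refine h.congr (ae_of_all _ fun v => ?_)
  show ‖Complex.exp _‖ = _
  rw [Complex.norm_exp]
  congr 1
  simp
  norm_cast
  ring

lemma map_normSq_stdGauss {m : ℕ} (hm : 0 < m) :
    (stdGauss m).map (fun y : EuclideanSpace ℝ (Fin m) => ‖y‖ ^ 2) = chiSqMeasure m := by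
  have hne : Nonempty (Fin m) := ⟨⟨0, hm⟩⟩
  have hnt : Nontrivial (EuclideanSpace ℝ (Fin m)) := by
    apply Module.nontrivial_of_finrank_pos (R := ℝ)
    rw [finrank_euclideanSpace_fin]
    exact hm
  set c : ℝ := (Real.sqrt (2*π))⁻¹ ^ m with hc
  have hcpos : 0 < c := by positivity
  have hF : Measurable (fun y : EuclideanSpace ℝ (Fin m) => ‖y‖ ^ 2) := by fun_prop
  ext s hs
  rw [Measure.map_apply hF hs, stdGauss, withDensity_apply _ (hF hs),
    ← lintegral_indicator (hF hs)]
  set Q : Set ℝ := (fun t : ℝ => t ^ 2) ⁻¹' s with hQ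
  have hQmeas : MeasurableSet Q := (by fun_prop : Measurable fun t : ℝ => t ^ 2) hs
  set φ : ℝ → ℝ := Q.indicator (fun r => c * Real.exp (-r^2/2)) with hφ
  have hφmeas : Measurable φ := by
    apply Measurable.indicator
    · fun_prop
    · exact hQmeas
  have hind : ∀ x : EuclideanSpace ℝ (Fin m),
      ((fun y : EuclideanSpace ℝ (Fin m) => ‖y‖ ^ 2) ⁻¹' s).indicator
        (fun x => ENNReal.ofReal (c * Real.exp (-‖x‖^2/2))) x = ENNReal.ofReal (φ ‖x‖) := by
    intro x
    by_cases hx : ‖x‖ ^ 2 ∈ s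
    · rw [indicator_of_mem
          (show x ∈ (fun y : EuclideanSpace ℝ (Fin m) => ‖y‖ ^ 2) ⁻¹' s from hx), hφ,
        indicator_of_mem (show ‖x‖ ∈ Q from hx)]
    · rw [indicator_of_notMem
          (show x ∉ (fun y : EuclideanSpace ℝ (Fin m) => ‖y‖ ^ 2) ⁻¹' s from hx), hφ,
        indicator_of_notMem (show ‖x‖ ∉ Q from hx), ENNReal.ofReal_zero]
  refine Eq.trans (lintegral_congr hind) ?_
  have hφnonneg : ∀ r, 0 ≤ φ r :=
    fun r => indicator_nonneg (fun t _ => by positivity) r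
  have hφint : Integrable (fun x : EuclideanSpace ℝ (Fin m) => φ ‖x‖) := by
    refine Integrable.mono' ((integrable_gaussian_norm m).const_mul c)
      ((hφmeas.comp measurable_norm).aestronglyMeasurable) (ae_of_all _ fun x => ?_)
    rw [Real.norm_eq_abs, abs_of_nonneg (hφnonneg _)]
    by_cases hx : ‖x‖ ^ 2 ∈ s
    · rw [hφ, indicator_of_mem (show ‖x‖ ∈ Q from hx)]
    · rw [hφ, indicator_of_notMem (show ‖x‖ ∉ Q from hx)]
      positivity
  rw [← ofReal_integral_eq_lintegral_ofReal hφint (ae_of_all _ fun x => hφnonneg ‖x‖),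
    integral_fun_norm_addHaar volume φ, finrank_euclideanSpace_fin]
  have hball : (volume (ball (0 : EuclideanSpace ℝ (Fin m)) 1)).toReal
      = Real.sqrt π ^ m / Real.Gamma ((m:ℝ)/2 + 1) := by
    rw [EuclideanSpace.volume_ball, ENNReal.ofReal_one, one_pow, one_mul,
      ENNReal.toReal_ofReal (by positivity), Fintype.card_fin]
  have hsub : (∫ y in Ioi (0:ℝ), y ^ (m - 1) • φ y)
      = ∫ x in Ioi (0:ℝ), s.indicator
          (fun x => (c/2) * (x ^ ((m:ℝ)/2 - 1) * Real.exp (-x/2))) x := by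
    rw [← integral_comp_rpow_Ioi (fun y => y ^ (m-1) • φ y)
      (p := (2:ℝ)⁻¹) (by norm_num)]
    refine setIntegral_congr_fun measurableSet_Ioi fun x hx => ?_
    have hx' : (0:ℝ) < x := hx
    have hrsq : (x ^ ((2:ℝ)⁻¹)) ^ (2:ℕ) = x := by
      rw [← Real.rpow_natCast (x ^ ((2:ℝ)⁻¹)) 2, ← Real.rpow_mul hx'.le]
      norm_num
    have hpow : x ^ ((2:ℝ)⁻¹ - 1) * (x ^ ((2:ℝ)⁻¹)) ^ (m-1 : ℕ) = x ^ ((m:ℝ)/2 - 1) := by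
      rw [← Real.rpow_natCast (x ^ ((2:ℝ)⁻¹)) (m-1), ← Real.rpow_mul hx'.le,
        ← Real.rpow_add hx']
      congr 1
      have : ((m - 1 : ℕ) : ℝ) = (m:ℝ) - 1 := by
        rw [Nat.cast_sub hm, Nat.cast_one]
      rw [this]
      ring
    have hmem : (x ^ ((2:ℝ)⁻¹) ∈ Q) ↔ x ∈ s := by
      rw [hQ, Set.mem_preimage, hrsq]
    by_cases hxs : x ∈ s
    · rw [indicator_of_mem hxs, hφ, indicator_of_mem (hmem.2 hxs)]
      simp only [smul_eq_mul, abs_of_pos (by norm_num : (0:ℝ) < 2⁻¹)]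
      rw [hrsq]
      rw [show (2:ℝ)⁻¹ * x ^ ((2:ℝ)⁻¹ - 1) * ((x ^ ((2:ℝ)⁻¹)) ^ (m-1) * (c * Real.exp (-x/2)))
          = (x ^ ((2:ℝ)⁻¹ - 1) * (x ^ ((2:ℝ)⁻¹)) ^ (m-1)) * ((2:ℝ)⁻¹ * (c * Real.exp (-x/2)))
          from by ring, hpow]
      ring
    · rw [indicator_of_notMem hxs, hφ,
        indicator_of_notMem (fun h => hxs (hmem.1 h))]
      simp
  rw [hsub]
  have hRHS : chiSqMeasure m s = ENNReal.ofReal (∫ x in Ioi (0:ℝ),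
      s.indicator (chiSqPDF m) x) := by
    rw [chiSqMeasure, withDensity_apply _ hs,
      ← ofReal_integral_eq_lintegral_ofReal ((integrable_chiSqPDF hm).integrableOn)
        (ae_of_all _ fun x => chiSqPDF_nonneg m x),
      ← integral_indicator hs,
      ← setIntegral_eq_integral_of_forall_compl_eq_zero
        (s := Ioi (0:ℝ)) (fun x hx => ?_)]
    rw [Set.indicator_apply_eq_zero]
    intro _
    rw [chiSqPDF, if_neg (by simpa using hx)]
  rw [hRHS]
  have hchicore : ∫ x in Ioi (0:ℝ), s.indicator (chiSqPDF m) x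
      = (1 / (2 ^ ((m : ℝ) / 2) * Real.Gamma ((m : ℝ) / 2))) *
        ∫ x in Ioi (0:ℝ), s.indicator (fun x => x ^ ((m:ℝ)/2 - 1) * Real.exp (-x/2)) x := by
    rw [← integral_const_mul]
    refine setIntegral_congr_fun measurableSet_Ioi fun x hx => ?_
    by_cases hxs : x ∈ s
    · rw [indicator_of_mem hxs, indicator_of_mem hxs, chiSqPDF, if_pos (show (0:ℝ) < x from hx)]
      field_simp
    · rw [indicator_of_notMem hxs, indicator_of_notMem hxs, mul_zero]
  have hcore : (∫ x in Ioi (0:ℝ), s.indicator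
        (fun x => (c/2) * (x ^ ((m:ℝ)/2 - 1) * Real.exp (-x/2))) x)
      = (c/2) * ∫ x in Ioi (0:ℝ),
          s.indicator (fun x => x ^ ((m:ℝ)/2 - 1) * Real.exp (-x/2)) x := by
    rw [← integral_const_mul]
    refine setIntegral_congr_fun measurableSet_Ioi fun x hx => ?_
    exact Set.indicator_const_mul s _ _ x
  rw [hchicore, hcore, measureReal_def, hball, nsmul_eq_mul, smul_eq_mul]
  congr 1
  rw [← mul_assoc, ← mul_assoc]
  rw [show (m:ℝ) * (Real.sqrt π ^ m / Real.Gamma ((m:ℝ)/2 + 1)) * (c/2)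
    = (m : ℝ) * (Real.sqrt π ^ m / Real.Gamma ((m:ℝ)/2 + 1)) * ((Real.sqrt (2*π))⁻¹ ^ m / 2)
    from by rw [hc], const_identity hm]



lemma std_law {Ω : Type*} [MeasurableSpace Ω] (P : Measure Ω) [IsProbabilityMeasure P]
    {X : Ω → ℝ} (hX : Measurable X) {μ σ : ℝ} (hσ : 0 < σ)
    (h : Measure.map X P = gaussianReal μ (Real.toNNReal (σ ^ 2))) :
    Measure.map (fun ω => (X ω - μ) / σ) P = gaussianReal 0 1 := by
  have hcomp : (fun ω => (X ω - μ) / σ) = ((σ⁻¹ * ·) ∘ ((· + (-μ)) ∘ X)) := by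
    funext ω
    show (X ω - μ) / σ = σ⁻¹ * (X ω + (-μ))
    field_simp
    ring
  have m1 : Measurable fun x : ℝ => σ⁻¹ * x := measurable_id.const_mul σ⁻¹
  have m2 : Measurable fun x : ℝ => x + (-μ) := measurable_id.add_const (-μ)
  rw [hcomp, ← Measure.map_map m1 (m2.comp hX),
    ← Measure.map_map m2 hX, h,
    gaussianReal_map_add_const (-μ), gaussianReal_map_const_mul σ⁻¹]
  have h0 : μ + -μ = 0 := by ring
  rw [h0, mul_zero]
  congr 1
  apply NNReal.coe_injective
  rw [NNReal.coe_mul, Real.coe_toNNReal _ (sq_nonneg σ), NNReal.coe_one]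
  show σ⁻¹ ^ 2 * σ ^ 2 = 1
  field_simp


end CochranAux
end
end Auxiliary

/-- For i.i.d. `N(μ,σ²)` with `n ≥ 2`, `SS̄/σ² = (∑ₖ(Xₖ−μ̄)²)/σ²` is chi-squared
distributed with `n−1` degrees of freedom. -/
theorem sum_sq_over_var_chiSq {Ω : Type*} [MeasurableSpace Ω] (P : Measure Ω)
    [IsProbabilityMeasure P] (n : ℕ) (hn : 2 ≤ n) (μ : ℝ) (σ : ℝ) (hσ : 0 < σ)
    (X : Fin n → Ω → ℝ) (hX : ∀ k, Measurable (X k))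
    (hindep : iIndepFun X P)
    (hlaw : ∀ k, Measure.map (X k) P = gaussianReal μ (Real.toNNReal (σ ^ 2))) :
    Measure.map (fun ω => (∑ k, (X k ω - (∑ j, X j ω) / n) ^ 2) / σ ^ 2) P
      = chiSqMeasure (n - 1) := by
  classical
  obtain ⟨m, rfl⟩ : ∃ m, n = m + 1 := ⟨n - 1, by omega⟩
  have hm : 0 < m := by omega
  set Y : Fin (m+1) → Ω → ℝ := fun k ω => (X k ω - μ) / σ with hYdef
  have hYmeas : ∀ k, Measurable (Y k) := fun k => ((hX k).sub_const μ).div_const σ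
  have hYlaw : ∀ k, Measure.map (Y k) P = gaussianReal 0 1 :=
    fun k => CochranAux.std_law P (hX k) hσ (hlaw k)
  have hYindep : iIndepFun Y P :=
    hindep.comp (fun _ t => (t - μ) / σ)
      (fun _ => (measurable_id.sub_const μ).div_const σ)
  have hjoint : Measure.map (fun ω (i : Fin (m+1)) => Y i ω) P
      = Measure.pi (fun _ => gaussianReal 0 1) :=
    CochranAux.map_pi_of_iIndep P Y hYmeas hYindep _ hYlaw
  -- the unit vector in the direction (1,…,1)
  set u : EuclideanSpace ℝ (Fin (m+1)) := WithLp.toLp 2 (fun _ => (Real.sqrt ((m:ℝ)+1))⁻¹) with hu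
  have hm1pos : (0:ℝ) < (m:ℝ) + 1 := by positivity
  have hsq : Real.sqrt ((m:ℝ)+1) ^ 2 = (m:ℝ)+1 := Real.sq_sqrt hm1pos.le
  have hsqrtpos : 0 < Real.sqrt ((m:ℝ)+1) := Real.sqrt_pos.2 hm1pos
  have hunorm : ‖u‖ = 1 := by
    rw [EuclideanSpace.norm_eq]
    have : ∀ i : Fin (m+1), ‖u i‖ ^ 2 = ((m:ℝ)+1)⁻¹ := by
      intro i
      have hux : u i = (Real.sqrt ((m:ℝ)+1))⁻¹ := rfl
      rw [hux, Real.norm_eq_abs, sq_abs, inv_pow, hsq]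
    rw [Finset.sum_congr rfl fun i _ => this i, Finset.sum_const, Finset.card_univ,
      Fintype.card_fin, nsmul_eq_mul]
    push_cast
    rw [mul_inv_cancel₀ hm1pos.ne', Real.sqrt_one]
  have horth : Orthonormal ℝ
      (Set.restrict {Fin.last m} (fun _ : Fin (m+1) => u)) := by
    constructor
    · intro i
      exact hunorm
    · intro i j hij
      exact absurd (Subtype.ext (i.2.trans j.2.symm)) hij
  have hcard : Module.finrank ℝ (EuclideanSpace ℝ (Fin (m+1)))
      = Fintype.card (Fin (m+1)) := by
    simp [finrank_euclideanSpace_fin]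
  obtain ⟨b, hb⟩ := horth.exists_orthonormalBasis_extension_of_card_eq hcard
  have hbu : b (Fin.last m) = u := hb _ rfl
  set e := (MeasurableEquiv.toLp 2 (Fin (m+1) → ℝ)).symm with he
  set H : EuclideanSpace ℝ (Fin (m+1)) → ℝ :=
    fun w => (∑ i, w i ^ 2) - w (Fin.last m) ^ 2 with hH
  -- the key algebraic identity
  have step2 : ∀ w : EuclideanSpace ℝ (Fin (m+1)),
      ∑ k, (w k - (∑ j, w j) / ((m:ℝ)+1)) ^ 2 = H (b.repr w) := by
    intro w
    set S : ℝ := ∑ j, w j with hS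
    have hL : ∑ k, (w k - S / ((m:ℝ)+1)) ^ 2
        = (∑ k, w k ^ 2) - S^2/((m:ℝ)+1) := by
      have hexp : ∀ k : Fin (m+1), (w k - S/((m:ℝ)+1))^2
          = w k^2 - (2*(S/((m:ℝ)+1)))*w k + (S/((m:ℝ)+1))^2 := fun k => by ring
      rw [Finset.sum_congr rfl fun k _ => hexp k]
      rw [Finset.sum_add_distrib, Finset.sum_sub_distrib, ← Finset.mul_sum, ← hS,
        Finset.sum_const, Finset.card_univ, Fintype.card_fin, nsmul_eq_mul]
      push_cast
      field_simp
      ring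
    have hR1 : ∑ i, (b.repr w) i ^ 2 = ∑ k, w k ^ 2 := by
      have h1 : ‖b.repr w‖ = ‖w‖ := b.repr.norm_map w
      have h2 : ∀ v : EuclideanSpace ℝ (Fin (m+1)), ‖v‖^2 = ∑ i, v i ^ 2 := by
        intro v
        rw [EuclideanSpace.norm_eq, Real.sq_sqrt (by positivity)]
        exact Finset.sum_congr rfl fun i _ => by rw [Real.norm_eq_abs, sq_abs]
      calc ∑ i, (b.repr w) i ^ 2 = ‖b.repr w‖ ^ 2 := (h2 _).symm
        _ = ‖w‖ ^ 2 := by rw [h1]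
        _ = ∑ k, w k ^ 2 := h2 w
    have hR2 : b.repr w (Fin.last m) = S / Real.sqrt ((m:ℝ)+1) := by
      rw [OrthonormalBasis.repr_apply_apply, hbu]
      rw [PiLp.inner_apply]
      have hux : ∀ x : Fin (m+1), u x = (Real.sqrt ((m:ℝ)+1))⁻¹ := fun _ => rfl
      simp only [RCLike.inner_apply, conj_trivial, hux]
      rw [← Finset.sum_mul, ← hS, div_eq_mul_inv]
    rw [hL]
    show _ = (∑ i, (b.repr w) i ^ 2) - (b.repr w) (Fin.last m) ^ 2
    rw [hR1, hR2, div_pow, hsq]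
  have key : ∀ ω, (∑ k, (X k ω - (∑ j, X j ω) / ((m+1 : ℕ) : ℝ)) ^ 2) / σ ^ 2
      = H (b.repr (e.symm (fun i => Y i ω))) := by
    intro ω
    rw [← step2 (e.symm (fun i => Y i ω))]
    have hw : ∀ k, (e.symm (fun i => Y i ω)) k = Y k ω := fun _ => rfl
    simp_rw [hw]
    have hcast : ((m+1 : ℕ) : ℝ) = (m:ℝ)+1 := by push_cast; ring
    rw [hcast, Finset.sum_div]
    refine Finset.sum_congr rfl fun k _ => ?_
    rw [← div_pow]
    congr 1
    have hY' : ∀ j, Y j ω = (X j ω - μ)/σ := fun _ => rfl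
    simp_rw [hY', ← Finset.sum_div]
    rw [Finset.sum_sub_distrib, Finset.sum_const, Finset.card_univ, Fintype.card_fin,
      nsmul_eq_mul]
    push_cast
    field_simp
    ring
  have hHmeas : Measurable H := by
    rw [hH]; fun_prop
  have hbmeas : Measurable (⇑b.repr) := b.repr.continuous.measurable
  have hesymm : Measurable (⇑e.symm) := e.symm.measurable
  have hvec : Measurable (fun ω (i : Fin (m+1)) => Y i ω) := measurable_pi_lambda _ hYmeas
  have hfun : (fun ω => (∑ k, (X k ω - (∑ j, X j ω) / ((m+1 : ℕ) : ℝ)) ^ 2) / σ ^ 2)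
      = (H ∘ ⇑b.repr ∘ ⇑e.symm) ∘ (fun ω (i : Fin (m+1)) => Y i ω) := funext key
  rw [hfun, ← Measure.map_map (hHmeas.comp (hbmeas.comp hesymm)) hvec, hjoint,
    show (H ∘ ⇑b.repr ∘ ⇑e.symm) = (H ∘ ⇑b.repr) ∘ ⇑e.symm from rfl,
    ← Measure.map_map (hHmeas.comp hbmeas) hesymm, he, CochranAux.stdGauss_eq_map,
    ← Measure.map_map hHmeas hbmeas, CochranAux.stdGauss_map_isometry b.repr, hH,
    CochranAux.map_h_stdGauss m, CochranAux.map_sum_sq_pi_gaussian m,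
    CochranAux.map_normSq_stdGauss hm]
  norm_num
end
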